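/- Let A, N_1,…,N_m ∈ ℝ^{n×n}, X₀ ∈ ℝ^{n×q}, let Ã, Ñ_1,…,Ñ_m ∈ ℝ^{ñ×ñ}, X̃₀ ∈ ℝ^{ñ×q}, V ∈ ℝ^{n×ñ}, γ > 0, and let u be a continuous control. Let Φ and Φ̃ be the fundamental solutions of the bilinear systems with matrices (A, N_k) and (Ã, Ñ_k) and the same control u. Then for all t ≥ 0, ‖Φ(t) X₀ − V Φ̃(t) X̃₀‖_F² ≤ tr([I −V] Z^e_γ(t) [I −V]^⊤) · exp{∫₀^t ‖γ u⁰(s)‖₂² ds}, where Z^e_γ solves Ż^e = A^e Z^e + Z^e (A^e)^⊤ + γ^{-2} Σ_k N_k^e Z^e (N_k^e)^⊤ with A^e = diag(A, Ã), N_k^e = diag(N_k, Ñ_k), Z^e(0) = [X₀; X̃₀][X₀; X̃₀]^⊤, and u⁰ is taken with respect to the augmented matrices N_k^e. -/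

import Mathlib

open MeasureTheory Matrix Topology Filter
open scoped Classical

set_option linter.unusedVariables false
set_option maxHeartbeats 1000000

attribute [local instance] Matrix.normedAddCommGroup Matrix.normedSpace

section AuxCalc
variable {ι κ ρ : Type*} [Fintype ι] [Fintype κ] [Fintype ρ]

private lemma hasDerivAt_entry {f : ℝ → Matrix ι κ ℝ} {f' : Matrix ι κ ℝ} {t : ℝ}
    (h : HasDerivAt f f' t) (i : ι) (j : κ) : HasDerivAt (fun s => f s i j) (f' i j) t :=
  hasDerivAt_pi.1 (hasDerivAt_pi.1 h i) j

private lemma hasDerivAt_of_entries {f : ℝ → Matrix ι κ ℝ} {f' : Matrix ι κ ℝ} {t : ℝ}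
    (h : ∀ i j, HasDerivAt (fun s => f s i j) (f' i j) t) : HasDerivAt f f' t :=
  hasDerivAt_pi.2 fun i => hasDerivAt_pi.2 (h i)

private lemma HasDerivAt.matMul {f : ℝ → Matrix ι κ ℝ} {g : ℝ → Matrix κ ρ ℝ}
    {f' : Matrix ι κ ℝ} {g' : Matrix κ ρ ℝ} {t : ℝ}
    (hf : HasDerivAt f f' t) (hg : HasDerivAt g g' t) :
    HasDerivAt (fun s => f s * g s) (f' * g t + f t * g') t := by
  apply hasDerivAt_of_entries
  intro i j
  have hmul : ∀ s, (f s * g s) i j = ∑ k, f s i k * g s k j := fun s => Matrix.mul_apply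
  simp only [hmul]
  have h : HasDerivAt (fun s => ∑ k, f s i k * g s k j)
      (∑ k, (f' i k * g t k j + f t i k * g' k j)) t :=
    HasDerivAt.fun_sum fun k _ => (hasDerivAt_entry hf i k).fun_mul (hasDerivAt_entry hg k j)
  simpa [Matrix.add_apply, Matrix.mul_apply, Finset.sum_add_distrib] using h

private lemma HasDerivAt.matTranspose {f : ℝ → Matrix ι κ ℝ} {f' : Matrix ι κ ℝ} {t : ℝ}
    (hf : HasDerivAt f f' t) : HasDerivAt (fun s => (f s)ᵀ) f'ᵀ t :=
  hasDerivAt_of_entries fun i j => hasDerivAt_entry hf j i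

private lemma HasDerivAt.smulMat {c : ℝ → ℝ} {c' : ℝ} {f : ℝ → Matrix ι κ ℝ}
    {f' : Matrix ι κ ℝ} {t : ℝ}
    (hc : HasDerivAt c c' t) (hf : HasDerivAt f f' t) :
    HasDerivAt (fun s => c s • f s) (c' • f t + c t • f') t := by
  apply hasDerivAt_of_entries
  intro i j
  simpa [Matrix.smul_apply, smul_eq_mul] using hc.fun_mul (hasDerivAt_entry hf i j)

private lemma HasDerivAt.matFromBlocks {a b a' b' : Type*}
    [Fintype a] [Fintype b] [Fintype a'] [Fintype b']
    {f : ℝ → Matrix a a' ℝ} {g : ℝ → Matrix b b' ℝ}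
    {f' : Matrix a a' ℝ} {g' : Matrix b b' ℝ} {t : ℝ}
    (hf : HasDerivAt f f' t) (hg : HasDerivAt g g' t) :
    HasDerivAt (fun s => Matrix.fromBlocks (f s) 0 0 (g s)) (Matrix.fromBlocks f' 0 0 g') t := by
  apply hasDerivAt_of_entries
  rintro (i | i) (j | j) <;>
    simp only [Matrix.fromBlocks_apply₁₁, Matrix.fromBlocks_apply₁₂,
      Matrix.fromBlocks_apply₂₁, Matrix.fromBlocks_apply₂₂, Matrix.zero_apply] <;>
    first
      | exact hasDerivAt_entry hf i j
      | exact hasDerivAt_entry hg i j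
      | exact hasDerivAt_const _ _

private lemma hasDerivAt_quad {Dm : ℝ → Matrix ι ι ℝ} {D' : Matrix ι ι ℝ} {τ : ℝ}
    (h : HasDerivAt Dm D' τ) (x : ι → ℝ) :
    HasDerivAt (fun s => x ⬝ᵥ (Dm s *ᵥ x)) (x ⬝ᵥ (D' *ᵥ x)) τ := by
  have hexp : ∀ (M : Matrix ι ι ℝ), x ⬝ᵥ (M *ᵥ x) = ∑ i, ∑ j, x i * (M i j * x j) := by
    intro M; simp [dotProduct, Matrix.mulVec, Finset.mul_sum]
  simp only [hexp]
  exact HasDerivAt.fun_sum fun i _ => HasDerivAt.fun_sum fun j _ =>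
    ((hasDerivAt_entry h i j).mul_const (x j)).const_mul (x i)

end AuxCalc

section AuxQuad
variable {ι κ : Type*} [Fintype ι] [Fintype κ]

private lemma quad_abs_le (M : Matrix ι ι ℝ) (x : ι → ℝ) :
    |x ⬝ᵥ (M *ᵥ x)| ≤ (∑ i, ∑ j, |M i j|) * (x ⬝ᵥ x) := by
  have hsq : ∀ i, x i * x i ≤ x ⬝ᵥ x := fun i =>
    Finset.single_le_sum (f := fun i => x i * x i) (fun i _ => mul_self_nonneg _)
      (Finset.mem_univ i)
  have hterm : ∀ i j, |x i * (M i j * x j)| ≤ |M i j| * (x ⬝ᵥ x) := by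
    intro i j
    have h1 := hsq i
    have h2 := hsq j
    have e : |x i * (M i j * x j)| = |M i j| * (|x i| * |x j|) := by
      rw [abs_mul, abs_mul]; ring
    rw [e]
    have hle : |x i| * |x j| ≤ x ⬝ᵥ x := by
      nlinarith [sq_nonneg (|x i| - |x j|), abs_mul_abs_self (x i), abs_mul_abs_self (x j),
        abs_nonneg (x i), abs_nonneg (x j)]
    exact mul_le_mul_of_nonneg_left hle (abs_nonneg _)
  have hexp : x ⬝ᵥ (M *ᵥ x) = ∑ i, ∑ j, x i * (M i j * x j) := by
    simp [dotProduct, Matrix.mulVec, Finset.mul_sum]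
  calc |x ⬝ᵥ (M *ᵥ x)| = |∑ i, ∑ j, x i * (M i j * x j)| := by rw [hexp]
    _ ≤ ∑ i, |∑ j, x i * (M i j * x j)| := Finset.abs_sum_le_sum_abs _ _
    _ ≤ ∑ i, ∑ j, |x i * (M i j * x j)| :=
        Finset.sum_le_sum fun i _ => Finset.abs_sum_le_sum_abs _ _
    _ ≤ ∑ i, ∑ j, |M i j| * (x ⬝ᵥ x) :=
        Finset.sum_le_sum fun i _ => Finset.sum_le_sum fun j _ => hterm i j
    _ = (∑ i, ∑ j, |M i j|) * (x ⬝ᵥ x) := by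
        simp [Finset.sum_mul]

private lemma mulVec_sq_le (M : Matrix ι κ ℝ) (x : κ → ℝ) :
    (M *ᵥ x) ⬝ᵥ (M *ᵥ x) ≤ (∑ i, ∑ j, (M i j) ^ 2) * (x ⬝ᵥ x) := by
  have hxx : x ⬝ᵥ x = ∑ j, (x j) ^ 2 := by simp [dotProduct, sq]
  have hrow : ∀ i, (M *ᵥ x) i * (M *ᵥ x) i ≤ (∑ j, (M i j) ^ 2) * (x ⬝ᵥ x) := by
    intro i
    have h := Finset.sum_mul_sq_le_sq_mul_sq Finset.univ (fun j => M i j) (fun j => x j)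
    have e : (M *ᵥ x) i = ∑ j, M i j * x j := by simp [Matrix.mulVec, dotProduct]
    rw [e, hxx]
    nlinarith [h]
  calc (M *ᵥ x) ⬝ᵥ (M *ᵥ x) = ∑ i, (M *ᵥ x) i * (M *ᵥ x) i := rfl
    _ ≤ ∑ i, (∑ j, (M i j) ^ 2) * (x ⬝ᵥ x) := Finset.sum_le_sum fun i _ => hrow i
    _ = (∑ i, ∑ j, (M i j) ^ 2) * (x ⬝ᵥ x) := by simp [Finset.sum_mul]

private lemma psd_kernel {M : Matrix ι ι ℝ} (hsym : Mᵀ = M)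
    (hpsd : ∀ y : ι → ℝ, 0 ≤ y ⬝ᵥ (M *ᵥ y)) {x : ι → ℝ} (hx : x ⬝ᵥ (M *ᵥ x) = 0) :
    M *ᵥ x = 0 := by
  have key : ∀ y : ι → ℝ, y ⬝ᵥ (M *ᵥ x) = 0 := by
    intro y
    set a := y ⬝ᵥ (M *ᵥ x) with ha
    set b := y ⬝ᵥ (M *ᵥ y) with hb
    have hbnn : 0 ≤ b := hpsd y
    have hsymdot : x ⬝ᵥ (M *ᵥ y) = a := by
      rw [dotProduct_mulVec, ← Matrix.mulVec_transpose, hsym, ha, dotProduct_comm]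
    have hq : ∀ t : ℝ, 0 ≤ 2 * t * a + t ^ 2 * b := by
      intro t
      have h := hpsd (x + t • y)
      have e : (x + t • y) ⬝ᵥ (M *ᵥ (x + t • y))
          = x ⬝ᵥ (M *ᵥ x) + t * (x ⬝ᵥ (M *ᵥ y)) + t * (y ⬝ᵥ (M *ᵥ x)) + t ^ 2 * b := by
        rw [Matrix.mulVec_add, Matrix.mulVec_smul]
        simp only [dotProduct_add, add_dotProduct, smul_dotProduct, dotProduct_smul,
          smul_eq_mul, hb]
        ring
      rw [e, hx, hsymdot] at h
      linarith
    set t₀ := a / (b + 1) with ht₀def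
    have hb1 : (0:ℝ) < b + 1 := by linarith
    have ht₀ : t₀ * (b + 1) = a := div_mul_cancel₀ a (ne_of_gt hb1)
    have h1 : 0 ≤ 2 * (-t₀) * a + (-t₀) ^ 2 * b := hq (-t₀)
    rw [← ht₀] at h1
    have h2 : t₀ ^ 2 * (b + 2) ≤ 0 := by nlinarith [h1]
    have h3 : t₀ = 0 := by nlinarith [sq_nonneg t₀]
    rw [← ht₀, h3, zero_mul]
  have := key (M *ᵥ x)
  exact dotProduct_self_eq_zero.mp this

end AuxQuad

/-- Invariance of nonnegativity of the quadratic form along a matrix ODE. -/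
private lemma quad_nonneg_invariant {ι : Type*} [Fintype ι] [DecidableEq ι] {T c : ℝ}
    {D D' : ℝ → Matrix ι ι ℝ}
    (hsym : ∀ t, (D t)ᵀ = D t)
    (hD : ∀ t ∈ Set.Icc (0:ℝ) T, HasDerivAt D (D' t) t)
    (h0 : ∀ x : ι → ℝ, 0 ≤ x ⬝ᵥ (D 0 *ᵥ x))
    (hkey : ∀ t ∈ Set.Icc (0:ℝ) T, ∀ ε : ℝ, 0 < ε → ∀ x : ι → ℝ, x ⬝ᵥ x = 1 →
      (∀ y : ι → ℝ, -(ε * (y ⬝ᵥ y)) ≤ y ⬝ᵥ (D t *ᵥ y)) →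
      D t *ᵥ x = (-ε) • x →
      -(c * ε) ≤ x ⬝ᵥ (D' t *ᵥ x)) :
    ∀ t ∈ Set.Icc (0:ℝ) T, ∀ x : ι → ℝ, 0 ≤ x ⬝ᵥ (D t *ᵥ x) := by
  rcases isEmpty_or_nonempty ι with hι | hι
  · intro t ht x
    simp [dotProduct]
  set r : ℝ := max c 0 + 1 with hr
  have hcr : c ≤ r - 1 := by simp [hr]
  have hr1 : (1:ℝ) ≤ r := by simp [hr]
  -- the quadratic form of `E ε s := D s + (ε * exp (r s)) • 1`
  have hquadE : ∀ (ε s : ℝ) (z : ι → ℝ),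
      z ⬝ᵥ ((D s + (ε * Real.exp (r * s)) • (1 : Matrix ι ι ℝ)) *ᵥ z)
        = z ⬝ᵥ (D s *ᵥ z) + (ε * Real.exp (r * s)) * (z ⬝ᵥ z) := by
    intro ε s z
    rw [Matrix.add_mulVec, Matrix.smul_mulVec, Matrix.one_mulVec, dotProduct_add]
    simp [smul_eq_mul]
  -- main claim
  have claim : ∀ ε : ℝ, 0 < ε → ∀ s ∈ Set.Icc (0:ℝ) T, ∀ z : ι → ℝ, z ⬝ᵥ z = 1 →
      0 < z ⬝ᵥ (D s *ᵥ z) + ε * Real.exp (r * s) := by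
    intro ε hε
    set E : ℝ → Matrix ι ι ℝ := fun s => D s + (ε * Real.exp (r * s)) • (1 : Matrix ι ι ℝ)
      with hE
    -- the unit sphere
    set Sp : Set (ι → ℝ) := {z | z ⬝ᵥ z = 1} with hSp
    have hdotcont : Continuous fun z : ι → ℝ => z ⬝ᵥ z := by
      unfold dotProduct
      exact continuous_finset_sum _ fun i _ => (continuous_apply i).mul (continuous_apply i)
    have hSpcl : IsClosed Sp := isClosed_eq hdotcont continuous_const
    have hSpbd : Bornology.IsBounded Sp := by
      apply Bornology.IsBounded.subset (Metric.isBounded_closedBall (x := (0 : ι → ℝ)) (r := 1))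
      intro z hz
      simp only [Metric.mem_closedBall, dist_zero_right]
      apply pi_norm_le_iff_of_nonneg zero_le_one |>.mpr
      intro i
      have hz1 : ∑ i, z i * z i = 1 := hz
      have h1 : z i * z i ≤ 1 := by
        have h2 := Finset.single_le_sum (f := fun i => z i * z i)
          (fun i _ => mul_self_nonneg _) (Finset.mem_univ i)
        rw [hz1] at h2; exact h2
      simpa [Real.norm_eq_abs] using abs_le_one_iff_mul_self_le_one.mpr h1
    have hSpcp : IsCompact Sp := Metric.isCompact_of_isClosed_isBounded hSpcl hSpbd
    have hSpne : Sp.Nonempty := by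
      refine ⟨Pi.single (Classical.arbitrary ι) 1, ?_⟩
      simp [hSp, dotProduct, Pi.single_apply]
    -- quadratic form continuity in z
    have hqcont : ∀ s, Continuous fun z : ι → ℝ => z ⬝ᵥ (E s *ᵥ z) := by
      intro s
      unfold dotProduct Matrix.mulVec
      refine continuous_finset_sum _ fun i _ => (continuous_apply i).mul ?_
      exact continuous_finset_sum _ fun j _ => continuous_const.mul (continuous_apply j)
    -- the minimum function
    set q : ℝ → (ι → ℝ) → ℝ := fun s z => z ⬝ᵥ (E s *ᵥ z) with hq
    set mf : ℝ → ℝ := fun s => sInf (q s '' Sp) with hmf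
    have himgcp : ∀ s, IsCompact (q s '' Sp) := fun s => hSpcp.image (hqcont s)
    have himgne : ∀ s, (q s '' Sp).Nonempty := fun s => hSpne.image _
    have hbdd : ∀ s, BddBelow (q s '' Sp) := fun s => (himgcp s).bddBelow
    have hmem : ∀ s, mf s ∈ q s '' Sp := fun s => (himgcp s).sInf_mem (himgne s)
    have hmle : ∀ s, ∀ z ∈ Sp, mf s ≤ q s z := fun s z hz =>
      csInf_le (hbdd s) ⟨z, hz, rfl⟩

    -- continuity of `mf` on the interval
    have hDcont : ∀ τ ∈ Set.Icc (0:ℝ) T, ContinuousWithinAt D (Set.Icc 0 T) τ :=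
      fun τ hτ => (hD τ hτ).continuousAt.continuousWithinAt
    have hEentry : ∀ i j, ContinuousOn (fun s => E s i j) (Set.Icc (0:ℝ) T) := by
      intro i j
      have he : ∀ s, E s i j = D s i j + (ε * Real.exp (r * s)) * (1 : Matrix ι ι ℝ) i j := by
        intro s; simp [hE, Matrix.add_apply, Matrix.smul_apply, smul_eq_mul]
      simp only [he]
      apply ContinuousOn.add
      · intro τ hτ
        exact (hasDerivAt_entry (hD τ hτ) i j).continuousAt.continuousWithinAt
      · exact Continuous.continuousOn (by continuity)
    set β : ℝ → ℝ → ℝ := fun s s' => ∑ i, ∑ j, |E s i j - E s' i j| with hβ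
    have hqdiff : ∀ s s' : ℝ, ∀ z ∈ Sp, |q s z - q s' z| ≤ β s s' := by
      intro s s' z hz
      have hz1 : z ⬝ᵥ z = 1 := hz
      have e : q s z - q s' z = z ⬝ᵥ ((E s - E s') *ᵥ z) := by
        simp only [hq, Matrix.sub_mulVec, dotProduct_sub]
      rw [e]
      have h := quad_abs_le (E s - E s') z
      rw [hz1, mul_one] at h
      simpa [hβ, Matrix.sub_apply] using h
    have hmdiff : ∀ s s' : ℝ, |mf s - mf s'| ≤ β s s' := by
      have key : ∀ s s' : ℝ, mf s - mf s' ≤ β s s' := by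
        intro s s'
        obtain ⟨z, hz, hqz⟩ := hmem s'
        have h1 := hmle s z hz
        have h2 := hqdiff s s' z hz
        have h3 := abs_le.mp h2
        rw [hqz] at *
        linarith [h3.2]
      intro s s'
      have h1 := key s s'
      have h2 := key s' s
      have hsymm : β s' s = β s s' := by
        simp only [hβ]
        congr 1; ext i; congr 1; ext j; rw [abs_sub_comm]
      rw [hsymm] at h2
      exact abs_sub_le_iff.mpr ⟨h1, h2⟩
    have hmcont : ContinuousOn mf (Set.Icc (0:ℝ) T) := by
      intro τ₀ hτ₀
      have hβcont : ContinuousWithinAt (fun s => β s τ₀) (Set.Icc (0:ℝ) T) τ₀ := by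
        apply (continuousOn_finset_sum _ fun i _ => continuousOn_finset_sum _ fun j _ =>
          ((hEentry i j).sub continuousOn_const).abs) τ₀ hτ₀
      have hβ0 : β τ₀ τ₀ = 0 := by simp [hβ]
      unfold ContinuousWithinAt
      apply tendsto_iff_dist_tendsto_zero.mpr
      apply squeeze_zero (g := fun s => β s τ₀) (fun s => dist_nonneg)
        (fun s => by rw [Real.dist_eq]; exact hmdiff s τ₀)
      have := hβcont.tendsto
      rwa [hβ0] at this
    -- contradiction set-up
    by_contra hcon
    push_neg at hcon
    obtain ⟨s₀, hs₀, z₀, hz₀1, hq₀⟩ := hcon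
    set B : Set ℝ := {s | s ∈ Set.Icc (0:ℝ) T ∧ mf s ≤ 0} with hB
    have hz₀Sp : z₀ ∈ Sp := hz₀1
    have hBne : B.Nonempty := by
      refine ⟨s₀, hs₀, ?_⟩
      have h1 := hmle s₀ z₀ hz₀Sp
      have h2 : q s₀ z₀ = z₀ ⬝ᵥ (D s₀ *ᵥ z₀) + ε * Real.exp (r * s₀) := by
        simp only [hq, hE]
        rw [hquadE ε s₀ z₀, hz₀1, mul_one]
      linarith [hq₀]
    have hBbd : BddBelow B := ⟨0, fun s hs => hs.1.1⟩
    have hBcl : IsClosed B := by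
      have he : B = Set.Icc (0:ℝ) T ∩ mf ⁻¹' Set.Iic 0 := by
        ext s; simp [hB, Set.mem_setOf_eq, Set.mem_Iic]
      rw [he]
      exact hmcont.preimage_isClosed_of_isClosed isClosed_Icc isClosed_Iic
    set τ := sInf B with hτdef
    have hτB : τ ∈ B := hBcl.csInf_mem hBne hBbd
    obtain ⟨hτIcc, hmτle⟩ := hτB
    have hm0pos : 0 < mf 0 := by
      obtain ⟨z, hz, hqz⟩ := hmem 0
      have hz1 : z ⬝ᵥ z = 1 := hz
      have h2 : q 0 z = z ⬝ᵥ (D 0 *ᵥ z) + ε * Real.exp (r * 0) := by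
        simp only [hq, hE]
        rw [hquadE ε 0 z, hz1, mul_one]
      have h3 := h0 z
      rw [← hqz]
      rw [h2]
      have : 0 < ε * Real.exp (r * 0) := mul_pos hε (Real.exp_pos _)
      linarith
    have hτpos : 0 < τ := by
      rcases lt_or_eq_of_le hτIcc.1 with h | h
      · exact h
      · exfalso; rw [← h] at hmτle; linarith
    have hltpos : ∀ s, 0 ≤ s → s < τ → 0 < mf s := by
      intro s h0s hsτ
      by_contra hle
      push_neg at hle
      have hsB : s ∈ B := ⟨⟨h0s, hsτ.le.trans hτIcc.2⟩, hle⟩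
      exact absurd hsB (notMem_of_lt_csInf hsτ hBbd)
    have hmτ0 : mf τ = 0 := by
      refine le_antisymm hmτle ?_
      have hsub : Set.Ioo (0:ℝ) τ ⊆ Set.Icc (0:ℝ) T :=
        fun y hy => ⟨hy.1.le, hy.2.le.trans hτIcc.2⟩
      have hneb : Filter.NeBot (𝓝[Set.Ioo (0:ℝ) τ] τ) := by
        rw [← mem_closure_iff_nhdsWithin_neBot, closure_Ioo hτpos.ne]
        exact ⟨hτpos.le, le_rfl⟩
      have htd : Filter.Tendsto mf (𝓝[Set.Ioo (0:ℝ) τ] τ) (𝓝 (mf τ)) :=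
        (hmcont τ hτIcc).mono hsub
      exact ge_of_tendsto htd (by
        filter_upwards [self_mem_nhdsWithin] with s hs
        exact (hltpos s hs.1.le hs.2).le)
    -- the touching direction
    obtain ⟨z, hzSp, hqz⟩ := hmem τ
    have hz1 : z ⬝ᵥ z = 1 := hzSp
    have hqzτ : z ⬝ᵥ (E τ *ᵥ z) = 0 := by
      have : q τ z = 0 := by rw [hqz, hmτ0]
      simpa [hq] using this
    have hEpsd : ∀ y : ι → ℝ, 0 ≤ y ⬝ᵥ (E τ *ᵥ y) := by
      intro y
      rcases eq_or_ne y 0 with rfl | hy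
      · simp
      · have hyy : 0 < y ⬝ᵥ y := by
          obtain ⟨i, hi⟩ := Function.ne_iff.mp hy
          exact Finset.sum_pos' (fun j _ => mul_self_nonneg _)
            ⟨i, Finset.mem_univ i, mul_self_pos.mpr hi⟩
        have hsa : (0:ℝ) < Real.sqrt (y ⬝ᵥ y) := Real.sqrt_pos.mpr hyy
        set z' : ι → ℝ := (Real.sqrt (y ⬝ᵥ y))⁻¹ • y with hz'def
        have hz' : z' ∈ Sp := by
          show z' ⬝ᵥ z' = 1
          rw [hz'def, smul_dotProduct, dotProduct_smul, smul_eq_mul, smul_eq_mul,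
            ← Real.mul_self_sqrt hyy.le]
          field_simp
          rw [Real.sqrt_sq hsa.le]
        have h1 := hmle τ z' hz'
        rw [hmτ0] at h1
        have h2 : q τ z' = (Real.sqrt (y ⬝ᵥ y))⁻¹ * ((Real.sqrt (y ⬝ᵥ y))⁻¹
            * (y ⬝ᵥ (E τ *ᵥ y))) := by
          simp only [hq, hz'def, smul_dotProduct, Matrix.mulVec_smul, dotProduct_smul,
            smul_eq_mul]
        rw [h2] at h1
        have hi : (0:ℝ) < (Real.sqrt (y ⬝ᵥ y))⁻¹ := inv_pos.mpr hsa
        nlinarith [h1, mul_pos hi hi]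
    have hEsym : (E τ)ᵀ = E τ := by
      simp [hE, Matrix.transpose_add, hsym, Matrix.transpose_smul]
    have hker : E τ *ᵥ z = 0 := psd_kernel hEsym hEpsd hqzτ
    set ε' := ε * Real.exp (r * τ) with hε'def
    have hε'pos : 0 < ε' := mul_pos hε (Real.exp_pos _)
    have hDz : D τ *ᵥ z = (-ε') • z := by
      have h1 : D τ *ᵥ z + ε' • z = 0 := by
        have h2 := hker
        simp only [hE, Matrix.add_mulVec, Matrix.smul_mulVec, Matrix.one_mulVec] at h2
        exact h2
      have h3 := eq_neg_of_add_eq_zero_left h1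
      rw [h3, neg_smul]
    have hlb : ∀ y : ι → ℝ, -(ε' * (y ⬝ᵥ y)) ≤ y ⬝ᵥ (D τ *ᵥ y) := by
      intro y
      have h1 := hEpsd y
      have h2 : y ⬝ᵥ (E τ *ᵥ y) = y ⬝ᵥ (D τ *ᵥ y) + ε' * (y ⬝ᵥ y) := by
        simp only [hE]; rw [hquadE ε τ y, hε'def]
      rw [h2] at h1
      linarith
    have happ := hkey τ hτIcc ε' hε'pos z hz1 hlb hDz
    -- the derivative of the touching quadratic form
    have hgD : HasDerivAt (fun s => z ⬝ᵥ (D s *ᵥ z) + ε * Real.exp (r * s))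
        (z ⬝ᵥ (D' τ *ᵥ z) + ε * (Real.exp (r * τ) * r)) τ := by
      apply (hasDerivAt_quad (hD τ hτIcc) z).add
      have h1 : HasDerivAt (fun s : ℝ => r * s) r τ := by
        simpa using (hasDerivAt_id τ).const_mul r
      exact h1.exp.const_mul ε
    have hgτ : z ⬝ᵥ (D τ *ᵥ z) + ε * Real.exp (r * τ) = 0 := by
      have h2 : z ⬝ᵥ (E τ *ᵥ z) = z ⬝ᵥ (D τ *ᵥ z) + (ε * Real.exp (r * τ)) * (z ⬝ᵥ z) := by
        simp only [hE]; rw [hquadE ε τ z]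
      rw [hqzτ, hz1, mul_one] at h2
      linarith [h2]
    have hg'pos : 0 < z ⬝ᵥ (D' τ *ᵥ z) + ε * (Real.exp (r * τ) * r) := by
      have h3 : ε * (Real.exp (r * τ) * r) = r * ε' := by rw [hε'def]; ring
      rw [h3]
      nlinarith [hε'pos, hcr]
    have hgpos : ∀ s ∈ Set.Ioo (0:ℝ) τ, 0 < z ⬝ᵥ (D s *ᵥ z) + ε * Real.exp (r * s) := by
      intro s hs
      have h1 := hltpos s hs.1.le hs.2
      have h2 := hmle s z hzSp
      have h3 : q s z = z ⬝ᵥ (D s *ᵥ z) + ε * Real.exp (r * s) := by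
        simp only [hq, hE]; rw [hquadE ε s z, hz1, mul_one]
      linarith
    -- slope contradiction
    set gg : ℝ → ℝ := fun s => z ⬝ᵥ (D s *ᵥ z) + ε * Real.exp (r * s) with hgg
    have hslope := hasDerivAt_iff_tendsto_slope.mp hgD
    have hmono : 𝓝[<] τ ≤ 𝓝[≠] τ := nhdsWithin_mono τ (fun y hy => ne_of_lt hy)
    have hsl2 : Filter.Tendsto (slope gg τ) (𝓝[<] τ)
        (𝓝 (z ⬝ᵥ (D' τ *ᵥ z) + ε * (Real.exp (r * τ) * r))) := hslope.mono_left hmono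
    have hev1 : ∀ᶠ s in 𝓝[<] τ, 0 < slope gg τ s := hsl2.eventually (eventually_gt_nhds hg'pos)
    have hev2 : ∀ᶠ s in 𝓝[<] τ, s ∈ Set.Ioo (0:ℝ) τ :=
      Ioo_mem_nhdsLT_of_mem ⟨hτpos, le_rfl⟩
    obtain ⟨s, hs1, hs2⟩ := (hev1.and hev2).exists
    have hgs := hgpos s hs2
    have hneg : slope gg τ s < 0 := by
      rw [slope_def_field]
      apply div_neg_of_pos_of_neg
      · have hggτ : gg τ = 0 := hgτ
        have hggs : 0 < gg s := hgs
        rw [hggτ, sub_zero]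
        exact hggs
      · linarith [hs2.2]
    linarith [hs1, hneg]

  -- conclude from the claim
  intro t ht x
  rcases eq_or_ne x 0 with rfl | hx
  · simp
  · have hxx : 0 < x ⬝ᵥ x := by
      obtain ⟨i, hi⟩ := Function.ne_iff.mp hx
      exact Finset.sum_pos' (fun j _ => mul_self_nonneg _)
        ⟨i, Finset.mem_univ i, mul_self_pos.mpr hi⟩
    have hsa : (0:ℝ) < Real.sqrt (x ⬝ᵥ x) := Real.sqrt_pos.mpr hxx
    set z : ι → ℝ := (Real.sqrt (x ⬝ᵥ x))⁻¹ • x with hzdef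
    have hz1 : z ⬝ᵥ z = 1 := by
      rw [hzdef, smul_dotProduct, dotProduct_smul, smul_eq_mul, smul_eq_mul,
        ← Real.mul_self_sqrt hxx.le]
      field_simp
      rw [Real.sqrt_sq hsa.le]
    have hquadz : ∀ ε : ℝ, 0 < ε → 0 < (Real.sqrt (x ⬝ᵥ x))⁻¹ *
        ((Real.sqrt (x ⬝ᵥ x))⁻¹ * (x ⬝ᵥ (D t *ᵥ x))) + ε * Real.exp (r * t) := by
      intro ε hε
      have h1 := claim ε hε t ht z hz1
      have h2 : z ⬝ᵥ (D t *ᵥ z) = (Real.sqrt (x ⬝ᵥ x))⁻¹ *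
          ((Real.sqrt (x ⬝ᵥ x))⁻¹ * (x ⬝ᵥ (D t *ᵥ x))) := by
        simp only [hzdef, smul_dotProduct, Matrix.mulVec_smul, dotProduct_smul, smul_eq_mul]
      rw [h2] at h1
      exact h1
    by_contra hneg
    push_neg at hneg
    set w := (Real.sqrt (x ⬝ᵥ x))⁻¹ * ((Real.sqrt (x ⬝ᵥ x))⁻¹ * (x ⬝ᵥ (D t *ᵥ x))) with hwdef
    have hw : w < 0 := by
      have hinv : (0:ℝ) < (Real.sqrt (x ⬝ᵥ x))⁻¹ := inv_pos.mpr hsa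
      rw [hwdef]
      nlinarith [hneg, mul_pos hinv hinv]
    have hexp : (0:ℝ) < Real.exp (r * t) := Real.exp_pos _
    have hεpos : 0 < -w / (2 * Real.exp (r * t)) := by
      apply div_pos (by linarith) (by positivity)
    have h1 := hquadz (-w / (2 * Real.exp (r * t))) hεpos
    have h2 : (-w / (2 * Real.exp (r * t))) * Real.exp (r * t) = -w / 2 := by
      field_simp
    rw [h2] at h1
    linarith
section AuxQuad2
variable {ι : Type*} [Fintype ι]

private lemma sum_mulVec {κ : Type*} (s : Finset κ) (M : κ → Matrix ι ι ℝ) (x : ι → ℝ) :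
    (∑ k ∈ s, M k) *ᵥ x = ∑ k ∈ s, (M k *ᵥ x) := by
  ext i
  rw [Finset.sum_apply]
  simp only [Matrix.mulVec, dotProduct, Matrix.sum_apply, Finset.sum_apply, Finset.sum_mul]
  rw [Finset.sum_comm]

private lemma dotProduct_sum' {κ : Type*} (s : Finset κ) (x : ι → ℝ) (v : κ → ι → ℝ) :
    x ⬝ᵥ (∑ k ∈ s, v k) = ∑ k ∈ s, x ⬝ᵥ v k := by
  simp only [dotProduct, Finset.sum_apply, Finset.mul_sum]
  rw [Finset.sum_comm]

private lemma dot_shift {κ : Type*} [Fintype κ] (M : Matrix ι κ ℝ) (x : ι → ℝ) (y : κ → ℝ) :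
    x ⬝ᵥ (M *ᵥ y) = (Mᵀ *ᵥ x) ⬝ᵥ y := by
  rw [dotProduct_mulVec, Matrix.mulVec_transpose]

private lemma quad_transpose (M : Matrix ι ι ℝ) (x : ι → ℝ) :
    x ⬝ᵥ (Mᵀ *ᵥ x) = x ⬝ᵥ (M *ᵥ x) := by
  rw [dot_shift, Matrix.transpose_transpose, dotProduct_comm]

/-- Quadratic form of the Lyapunov right-hand side, in symmetrized form. -/
private lemma quadFZ {m : ℕ} (Ae : Matrix ι ι ℝ) (Ne : Fin m → Matrix ι ι ℝ) (c : ℝ)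
    (Ze : Matrix ι ι ℝ) (x : ι → ℝ) :
    x ⬝ᵥ ((Ae * Ze + Ze * Aeᵀ + c • ∑ k, Ne k * Ze * (Ne k)ᵀ) *ᵥ x)
      = 2 * (x ⬝ᵥ (Ae *ᵥ (((2⁻¹:ℝ) • (Ze + Zeᵀ)) *ᵥ x)))
        + c * ∑ k, ((Ne k)ᵀ *ᵥ x) ⬝ᵥ (((2⁻¹:ℝ) • (Ze + Zeᵀ)) *ᵥ ((Ne k)ᵀ *ᵥ x)) := by
  have hterm3 : ∀ k : Fin m, x ⬝ᵥ ((Ne k * Ze * (Ne k)ᵀ) *ᵥ x)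
      = ((Ne k)ᵀ *ᵥ x) ⬝ᵥ (Ze *ᵥ ((Ne k)ᵀ *ᵥ x)) := by
    intro k
    rw [← Matrix.mulVec_mulVec, ← Matrix.mulVec_mulVec, dot_shift]
  have hZs : ∀ y : ι → ℝ, y ⬝ᵥ (((2⁻¹:ℝ) • (Ze + Zeᵀ)) *ᵥ y)
      = 2⁻¹ * (y ⬝ᵥ (Ze *ᵥ y)) + 2⁻¹ * (y ⬝ᵥ (Ze *ᵥ y)) := by
    intro y
    rw [Matrix.smul_mulVec, Matrix.add_mulVec, dotProduct_smul, smul_eq_mul,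
      dotProduct_add, quad_transpose]
    ring
  have h1 : x ⬝ᵥ ((Ae * Ze) *ᵥ x) = x ⬝ᵥ (Ae *ᵥ (Ze *ᵥ x)) := by
    rw [Matrix.mulVec_mulVec]
  have h2 : x ⬝ᵥ ((Ze * Aeᵀ) *ᵥ x) = x ⬝ᵥ (Ae *ᵥ (Zeᵀ *ᵥ x)) := by
    rw [← Matrix.mulVec_mulVec, dot_shift Ze, dot_shift Ae, dotProduct_comm]
  have h3 : x ⬝ᵥ (Ae *ᵥ (((2⁻¹:ℝ) • (Ze + Zeᵀ)) *ᵥ x))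
      = 2⁻¹ * (x ⬝ᵥ (Ae *ᵥ (Ze *ᵥ x))) + 2⁻¹ * (x ⬝ᵥ (Ae *ᵥ (Zeᵀ *ᵥ x))) := by
    rw [Matrix.smul_mulVec, Matrix.mulVec_smul, Matrix.add_mulVec, Matrix.mulVec_add,
      dotProduct_smul, smul_eq_mul, dotProduct_add]
    ring
  rw [Matrix.add_mulVec, Matrix.add_mulVec, dotProduct_add, dotProduct_add, h1, h2,
    Matrix.smul_mulVec, Matrix.sum_mulVec, dotProduct_smul, smul_eq_mul,
    dotProduct_sum']
  rw [h3]
  have hsum : ∀ k : Fin m, x ⬝ᵥ ((Ne k * Ze * (Ne k)ᵀ) *ᵥ x)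
      = ((Ne k)ᵀ *ᵥ x) ⬝ᵥ (((2⁻¹:ℝ) • (Ze + Zeᵀ)) *ᵥ ((Ne k)ᵀ *ᵥ x)) := by
    intro k
    rw [hterm3 k, hZs ((Ne k)ᵀ *ᵥ x)]
    ring
  rw [Finset.sum_congr rfl fun k _ => hsum k]
  have e1 : x ⬝ᵥ (Ae *ᵥ (Zeᵀ *ᵥ x)) = x ⬝ᵥ (Ae *ᵥ (Ze *ᵥ x))
      + (x ⬝ᵥ (Ae *ᵥ (Zeᵀ *ᵥ x)) - x ⬝ᵥ (Ae *ᵥ (Ze *ᵥ x))) := by ring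
  ring

/-- Completion-of-squares identity at the level of quadratic forms. -/
private lemma completion_identity (γ : ℝ) (hγ : γ ≠ 0) (Nk Zs : Matrix ι ι ℝ)
    (hsym : Zsᵀ = Zs) (uv : ℝ) (x : ι → ℝ) :
    (γ⁻¹ • (Nkᵀ *ᵥ x) - (γ * uv) • x) ⬝ᵥ (Zs *ᵥ (γ⁻¹ • (Nkᵀ *ᵥ x) - (γ * uv) • x))
      = (γ * uv)^2 * (x ⬝ᵥ (Zs *ᵥ x)) + (γ^2)⁻¹ * ((Nkᵀ *ᵥ x) ⬝ᵥ (Zs *ᵥ (Nkᵀ *ᵥ x)))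
        - 2 * uv * (x ⬝ᵥ (Nk *ᵥ (Zs *ᵥ x))) := by
  set y := Nkᵀ *ᵥ x with hy
  have hcross : x ⬝ᵥ (Zs *ᵥ y) = y ⬝ᵥ (Zs *ᵥ x) := by
    rw [dot_shift, hsym, dotProduct_comm]
  have hN : x ⬝ᵥ (Nk *ᵥ (Zs *ᵥ x)) = y ⬝ᵥ (Zs *ᵥ x) := by
    rw [dot_shift, ← hy]
  rw [Matrix.mulVec_sub, Matrix.mulVec_smul, Matrix.mulVec_smul, sub_dotProduct,
    smul_dotProduct, smul_dotProduct, dotProduct_sub, dotProduct_sub,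
    dotProduct_smul, dotProduct_smul, dotProduct_smul, dotProduct_smul]
  simp only [smul_eq_mul]
  rw [hcross, hN]
  have h2 : (γ^2)⁻¹ = γ⁻¹ * γ⁻¹ := by rw [sq, mul_inv]
  rw [h2]
  field_simp
  ring

end AuxQuad2
private lemma aux_main {ι : Type*} [Fintype ι] [DecidableEq ι] {qd m : ℕ}
    (γ : ℝ) (hγ : 0 < γ)
    (Ae : Matrix ι ι ℝ) (Ne : Fin m → Matrix ι ι ℝ) (Xe : Matrix ι (Fin qd) ℝ)
    (u : ℝ → Fin m → ℝ) (hu : Continuous u)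
    (Y : ℝ → Matrix ι (Fin qd) ℝ)
    (hY0 : Y 0 = Xe)
    (hYode : ∀ τ : ℝ, 0 ≤ τ → HasDerivAt Y ((Ae + ∑ k, u τ k • Ne k) * Y τ) τ)
    (Ze : ℝ → Matrix ι ι ℝ)
    (hZe0 : Ze 0 = Xe * Xeᵀ)
    (hZeode : ∀ τ : ℝ, 0 ≤ τ → HasDerivAt Ze
      (Ae * Ze τ + Ze τ * Aeᵀ + (γ ^ 2)⁻¹ • ∑ k, Ne k * Ze τ * (Ne k)ᵀ) τ)
    (t : ℝ) (ht : 0 ≤ t) :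
    ∀ x : ι → ℝ, 0 ≤ x ⬝ᵥ
      ((Real.exp (∫ v in (0:ℝ)..t, ∑ k, (γ * (if Ne k = 0 then (0:ℝ) else u v k)) ^ 2)
          • ((2⁻¹:ℝ) • (Ze t + (Ze t)ᵀ)) - Y t * (Y t)ᵀ) *ᵥ x) := by
  have hγ0 : γ ≠ 0 := ne_of_gt hγ
  have hγ2 : (0:ℝ) ≤ (γ ^ 2)⁻¹ := by positivity
  set Zs : ℝ → Matrix ι ι ℝ := fun s => (2⁻¹:ℝ) • (Ze s + (Ze s)ᵀ) with hZsdef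
  set FZ : ℝ → Matrix ι ι ℝ := fun s =>
    Ae * Ze s + Ze s * Aeᵀ + (γ ^ 2)⁻¹ • ∑ k, Ne k * Ze s * (Ne k)ᵀ with hFZdef
  set w : ℝ → ℝ := fun v => ∑ k, (γ * (if Ne k = 0 then (0:ℝ) else u v k)) ^ 2 with hwdef
  set f : ℝ → ℝ := fun s => ∫ v in (0:ℝ)..s, w v with hfdef
  have hZssym : ∀ s, (Zs s)ᵀ = Zs s := by
    intro s
    simp only [hZsdef, Matrix.transpose_smul, Matrix.transpose_add, Matrix.transpose_transpose]
    rw [add_comm]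
  have hZs0 : Zs 0 = Xe * Xeᵀ := by
    have h1 : (Xe * Xeᵀ)ᵀ = Xe * Xeᵀ := by
      rw [Matrix.transpose_mul, Matrix.transpose_transpose]
    simp only [hZsdef, hZe0, h1]
    rw [← two_smul ℝ (Xe * Xeᵀ), smul_smul]
    norm_num
  have hBBt : ∀ (B : Matrix ι (Fin qd) ℝ) (x : ι → ℝ), 0 ≤ x ⬝ᵥ ((B * Bᵀ) *ᵥ x) := by
    intro B x
    rw [← Matrix.mulVec_mulVec, dot_shift]
    exact Finset.sum_nonneg fun i _ => mul_self_nonneg _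
  have hZsode : ∀ τ : ℝ, 0 ≤ τ → HasDerivAt Zs ((2⁻¹:ℝ) • (FZ τ + (FZ τ)ᵀ)) τ := by
    intro τ hτ
    have h1 := hZeode τ hτ
    have h2 : HasDerivAt (fun s => Ze s + (Ze s)ᵀ) (FZ τ + (FZ τ)ᵀ) τ :=
      h1.add h1.matTranspose
    have h3 := (hasDerivAt_const τ (2⁻¹:ℝ)).smulMat h2
    simpa only [zero_smul, zero_add] using h3
  have hquadFZt : ∀ (τ : ℝ) (x : ι → ℝ),
      x ⬝ᵥ (((2⁻¹:ℝ) • (FZ τ + (FZ τ)ᵀ)) *ᵥ x) = x ⬝ᵥ (FZ τ *ᵥ x) := by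
    intro τ x
    rw [Matrix.smul_mulVec, Matrix.add_mulVec, dotProduct_smul, smul_eq_mul,
      dotProduct_add, quad_transpose]
    ring
  have hquadFZ : ∀ (τ : ℝ) (x : ι → ℝ),
      x ⬝ᵥ (FZ τ *ᵥ x) = 2 * (x ⬝ᵥ (Ae *ᵥ (Zs τ *ᵥ x)))
        + (γ ^ 2)⁻¹ * ∑ k, ((Ne k)ᵀ *ᵥ x) ⬝ᵥ (Zs τ *ᵥ ((Ne k)ᵀ *ᵥ x)) := by
    intro τ x
    exact quadFZ Ae Ne ((γ ^ 2)⁻¹) (Ze τ) x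
  set aA : ℝ := ∑ i, ∑ j, |Ae i j| with haA
  set bN : Fin m → ℝ := fun k => ∑ i, ∑ j, ((Ne k)ᵀ i j) ^ 2 with hbN
  have haA0 : ∀ x : ι → ℝ, x ⬝ᵥ x = 1 → |x ⬝ᵥ (Ae *ᵥ x)| ≤ aA := by
    intro x hx
    have h := quad_abs_le Ae x
    rw [hx, mul_one] at h
    exact h
  have hbN0 : ∀ (k : Fin m) (x : ι → ℝ), x ⬝ᵥ x = 1 →
      ((Ne k)ᵀ *ᵥ x) ⬝ᵥ ((Ne k)ᵀ *ᵥ x) ≤ bN k := by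
    intro k x hx
    have h := mulVec_sq_le ((Ne k)ᵀ) x
    rw [hx, mul_one] at h
    exact h
  -- first application of the invariance lemma : Zs is psd on [0, t]
  have hZpsd : ∀ s ∈ Set.Icc (0:ℝ) t, ∀ x : ι → ℝ, 0 ≤ x ⬝ᵥ (Zs s *ᵥ x) := by
    apply quad_nonneg_invariant (c := 2 * aA + (γ ^ 2)⁻¹ * ∑ k, bN k)
      (D' := fun τ => (2⁻¹:ℝ) • (FZ τ + (FZ τ)ᵀ)) hZssym
      (fun τ hτ => hZsode τ hτ.1)
    · intro x
      rw [hZs0]; exact hBBt Xe x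
    · intro τ hτ ε hε x hx hql hker
      rw [hquadFZt τ x, hquadFZ τ x]
      have h1 : x ⬝ᵥ (Ae *ᵥ (Zs τ *ᵥ x)) = -ε * (x ⬝ᵥ (Ae *ᵥ x)) := by
        rw [hker, Matrix.mulVec_smul, dotProduct_smul]
        simp only [smul_eq_mul]
        try ring
      have h2 : -(ε * aA) ≤ -ε * (x ⬝ᵥ (Ae *ᵥ x)) := by
        have h3 := abs_le.mp (haA0 x hx)
        nlinarith [h3.1, h3.2, hε.le]
      have h4 : ∀ k : Fin m, -(ε * bN k) ≤ ((Ne k)ᵀ *ᵥ x) ⬝ᵥ (Zs τ *ᵥ ((Ne k)ᵀ *ᵥ x)) := by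
        intro k
        have h5 := hql ((Ne k)ᵀ *ᵥ x)
        have h6 := hbN0 k x hx
        have h7 : (0:ℝ) ≤ ((Ne k)ᵀ *ᵥ x) ⬝ᵥ ((Ne k)ᵀ *ᵥ x) :=
          Finset.sum_nonneg fun i _ => mul_self_nonneg _
        nlinarith [h5, h6, h7, hε.le]
      have h7 : -(ε * ∑ k, bN k) ≤ ∑ k, ((Ne k)ᵀ *ᵥ x) ⬝ᵥ (Zs τ *ᵥ ((Ne k)ᵀ *ᵥ x)) := by
        have h8 := Finset.sum_le_sum fun k (_ : k ∈ Finset.univ) => h4 k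
        calc -(ε * ∑ k, bN k) = ∑ k, -(ε * bN k) := by
              rw [Finset.mul_sum, ← Finset.sum_neg_distrib]
          _ ≤ _ := h8
      rw [h1]
      have h9 := mul_le_mul_of_nonneg_left h7 hγ2
      nlinarith [h2, h9]
  -- continuity of w and differentiability of f
  have hwcont : Continuous w := by
    rw [hwdef]
    apply continuous_finset_sum
    intro k _
    by_cases h : Ne k = 0
    · simp only [h, if_true]
      exact continuous_const
    · simp only [h, if_false]
      exact (continuous_const.mul ((continuous_apply k).comp hu)).pow 2
  have hfd : ∀ τ : ℝ, HasDerivAt f (w τ) τ := by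
    intro τ
    rw [hfdef]
    exact intervalIntegral.integral_hasDerivAt_right (hwcont.intervalIntegrable _ _)
      hwcont.stronglyMeasurable.stronglyMeasurableAtFilter hwcont.continuousAt
  -- the matrices SS and DD
  set SS : ℝ → Matrix ι ι ℝ := fun s => Real.exp (f s) • Zs s with hSSdef
  set DD : ℝ → Matrix ι ι ℝ := fun s => SS s - Y s * (Y s)ᵀ with hDDdef
  set DF : ℝ → Matrix ι ι ℝ := fun τ =>
    ((Real.exp (f τ) * w τ) • Zs τ + Real.exp (f τ) • ((2⁻¹:ℝ) • (FZ τ + (FZ τ)ᵀ)))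
      - ((((Ae + ∑ k, u τ k • Ne k) * Y τ) * (Y τ)ᵀ)
          + Y τ * ((Ae + ∑ k, u τ k • Ne k) * Y τ)ᵀ) with hDFdef
  have hDDode : ∀ τ ∈ Set.Icc (0:ℝ) t, HasDerivAt DD (DF τ) τ := by
    intro τ hτ
    have h1 : HasDerivAt (fun s => Real.exp (f s)) (Real.exp (f τ) * w τ) τ := (hfd τ).exp
    have h2 := h1.smulMat (hZsode τ hτ.1)
    have h3 := (hYode τ hτ.1).matMul (hYode τ hτ.1).matTranspose
    exact h2.sub h3
  have hDDsym : ∀ s, (DD s)ᵀ = DD s := by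
    intro s
    simp only [hDDdef, hSSdef, Matrix.transpose_sub, Matrix.transpose_smul, hZssym,
      Matrix.transpose_mul, Matrix.transpose_transpose]
  have hf0 : f 0 = 0 := by rw [hfdef]; simp
  have hDD0 : ∀ x : ι → ℝ, 0 ≤ x ⬝ᵥ (DD 0 *ᵥ x) := by
    intro x
    have hz : DD 0 = 0 := by
      simp only [hDDdef, hSSdef, hf0, Real.exp_zero, one_smul, hZs0, hY0, sub_self]
    rw [hz]
    simp
  -- uniform bound K for the quadratic form of L on [0,t]
  have hKex : ∃ K : ℝ, ∀ τ ∈ Set.Icc (0:ℝ) t, ∀ x : ι → ℝ, x ⬝ᵥ x = 1 →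
      |x ⬝ᵥ ((Ae + ∑ k, u τ k • Ne k) *ᵥ x)| ≤ K := by
    have hcont : Continuous fun τ => ∑ i, ∑ j, |(Ae + ∑ k, u τ k • Ne k) i j| := by
      apply continuous_finset_sum; intro i _
      apply continuous_finset_sum; intro j _
      apply Continuous.abs
      have he : (fun τ => (Ae + ∑ k, u τ k • Ne k) i j)
          = fun τ => Ae i j + ∑ k, u τ k * Ne k i j := by
        funext τ
        simp [Matrix.add_apply, Matrix.sum_apply, Matrix.smul_apply, smul_eq_mul]
      rw [he]
      exact continuous_const.add (continuous_finset_sum _ fun k _ =>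
        ((continuous_apply k).comp hu).mul continuous_const)
    obtain ⟨K, hK⟩ := (isCompact_Icc (a := (0:ℝ)) (b := t)).exists_bound_of_continuousOn
      hcont.continuousOn
    refine ⟨K, fun τ hτ x hx => ?_⟩
    have h1 := quad_abs_le (Ae + ∑ k, u τ k • Ne k) x
    rw [hx, mul_one] at h1
    have h2 := hK τ hτ
    rw [Real.norm_eq_abs] at h2
    exact h1.trans ((le_abs_self _).trans h2)
  obtain ⟨K, hK⟩ := hKex
  -- second application : DD is psd on [0, t]
  have hDpsd : ∀ s ∈ Set.Icc (0:ℝ) t, ∀ x : ι → ℝ, 0 ≤ x ⬝ᵥ (DD s *ᵥ x) := by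
    apply quad_nonneg_invariant (c := 2 * K) (D' := DF) hDDsym hDDode hDD0
    intro τ hτ ε hε x hx hql hker
    have hEfpos : (0:ℝ) < Real.exp (f τ) := Real.exp_pos _
    -- P *ᵥ x  where  P = Y τ * (Y τ)ᵀ
    have hPmat : Y τ * (Y τ)ᵀ = SS τ - DD τ := by
      simp only [hDDdef]
      rw [sub_sub_cancel]
    have hPx : (Y τ * (Y τ)ᵀ) *ᵥ x = Real.exp (f τ) • (Zs τ *ᵥ x) + ε • x := by
      rw [hPmat, Matrix.sub_mulVec, hker]
      simp only [hSSdef, Matrix.smul_mulVec]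
      rw [neg_smul, sub_neg_eq_add]
    -- quadratic form of DF
    have hT3a : Y τ * ((Ae + ∑ k, u τ k • Ne k) * Y τ)ᵀ
        = ((Ae + ∑ k, u τ k • Ne k) * (Y τ * (Y τ)ᵀ))ᵀ := by
      rw [Matrix.transpose_mul (Ae + ∑ k, u τ k • Ne k) (Y τ),
        Matrix.transpose_mul (Ae + ∑ k, u τ k • Ne k) (Y τ * (Y τ)ᵀ),
        Matrix.transpose_mul (Y τ) ((Y τ)ᵀ), Matrix.transpose_transpose,
        ← Matrix.mul_assoc]
    have hquadDF : x ⬝ᵥ (DF τ *ᵥ x)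
        = (Real.exp (f τ) * w τ) * (x ⬝ᵥ (Zs τ *ᵥ x)) + Real.exp (f τ) * (x ⬝ᵥ (FZ τ *ᵥ x))
          - 2 * (x ⬝ᵥ ((Ae + ∑ k, u τ k • Ne k) *ᵥ ((Y τ * (Y τ)ᵀ) *ᵥ x))) := by
      simp only [hDFdef, Matrix.sub_mulVec, dotProduct_sub, Matrix.add_mulVec, dotProduct_add,
        Matrix.smul_mulVec, dotProduct_smul, smul_eq_mul]
      rw [Matrix.mul_assoc (Ae + ∑ k, u τ k • Ne k) (Y τ) ((Y τ)ᵀ)]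
      rw [hT3a, quad_transpose, quad_transpose]
      simp only [← Matrix.mulVec_mulVec]
      simp only [Matrix.add_mulVec, dotProduct_add]
      ring
    -- the completed-square nonnegative part
    have hpos : 0 ≤ (w τ) * (x ⬝ᵥ (Zs τ *ᵥ x)) + (x ⬝ᵥ (FZ τ *ᵥ x))
        - 2 * (x ⬝ᵥ ((Ae + ∑ k, u τ k • Ne k) *ᵥ (Zs τ *ᵥ x))) := by
      have hkey2 : ∀ k : Fin m,
          (γ * (if Ne k = 0 then (0:ℝ) else u τ k)) ^ 2 * (x ⬝ᵥ (Zs τ *ᵥ x))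
            + (γ ^ 2)⁻¹ * (((Ne k)ᵀ *ᵥ x) ⬝ᵥ (Zs τ *ᵥ ((Ne k)ᵀ *ᵥ x)))
            - 2 * (u τ k * (x ⬝ᵥ (Ne k *ᵥ (Zs τ *ᵥ x))))
          = (if Ne k = 0 then (0 : ι → ℝ) else γ⁻¹ • ((Ne k)ᵀ *ᵥ x) - (γ * u τ k) • x) ⬝ᵥ
              (Zs τ *ᵥ (if Ne k = 0 then (0 : ι → ℝ)
                else γ⁻¹ • ((Ne k)ᵀ *ᵥ x) - (γ * u τ k) • x)) := by
        intro k
        by_cases h : Ne k = 0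
        · simp [h]
        · simp only [h, if_false]
          have hc := completion_identity γ hγ0 (Ne k) (Zs τ) (hZssym τ) (u τ k) x
          rw [hc]
          ring
      have hLexp : x ⬝ᵥ ((Ae + ∑ k, u τ k • Ne k) *ᵥ (Zs τ *ᵥ x))
          = x ⬝ᵥ (Ae *ᵥ (Zs τ *ᵥ x))
            + ∑ k, u τ k * (x ⬝ᵥ (Ne k *ᵥ (Zs τ *ᵥ x))) := by
        rw [Matrix.add_mulVec, dotProduct_add, Matrix.sum_mulVec, dotProduct_sum']
        congr 1
        refine Finset.sum_congr rfl fun k _ => ?_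
        rw [Matrix.smul_mulVec, dotProduct_smul, smul_eq_mul]
      have hwτ : w τ = ∑ k, (γ * (if Ne k = 0 then (0:ℝ) else u τ k)) ^ 2 := rfl
      have hfinal : (w τ) * (x ⬝ᵥ (Zs τ *ᵥ x)) + (x ⬝ᵥ (FZ τ *ᵥ x))
          - 2 * (x ⬝ᵥ ((Ae + ∑ k, u τ k • Ne k) *ᵥ (Zs τ *ᵥ x)))
          = ∑ k, (if Ne k = 0 then (0 : ι → ℝ)
                else γ⁻¹ • ((Ne k)ᵀ *ᵥ x) - (γ * u τ k) • x) ⬝ᵥ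
              (Zs τ *ᵥ (if Ne k = 0 then (0 : ι → ℝ)
                else γ⁻¹ • ((Ne k)ᵀ *ᵥ x) - (γ * u τ k) • x)) := by
        rw [hquadFZ τ x, hLexp, hwτ]
        rw [← Finset.sum_congr rfl fun k (_ : k ∈ Finset.univ) => hkey2 k]
        rw [Finset.sum_sub_distrib, Finset.sum_add_distrib, ← Finset.sum_mul,
          ← Finset.mul_sum, ← Finset.mul_sum]
        ring
      rw [hfinal]
      exact Finset.sum_nonneg fun k _ => hZpsd τ hτ _
    -- kernel substitution
    have hLP : x ⬝ᵥ ((Ae + ∑ k, u τ k • Ne k) *ᵥ ((Y τ * (Y τ)ᵀ) *ᵥ x))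
        = Real.exp (f τ) * (x ⬝ᵥ ((Ae + ∑ k, u τ k • Ne k) *ᵥ (Zs τ *ᵥ x)))
          + ε * (x ⬝ᵥ ((Ae + ∑ k, u τ k • Ne k) *ᵥ x)) := by
      rw [hPx, Matrix.mulVec_add, dotProduct_add, Matrix.mulVec_smul, dotProduct_smul,
        Matrix.mulVec_smul, dotProduct_smul]
      simp only [smul_eq_mul]
    rw [hquadDF, hLP]
    have hKτ := abs_le.mp (hK τ hτ x hx)
    nlinarith [hpos, hEfpos, hKτ.1, hKτ.2, hε.le,
      mul_le_mul_of_nonneg_left hpos hEfpos.le]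
  -- conclusion
  intro x
  have h1 := hDpsd t ⟨ht, le_rfl⟩ x
  simpa only [hDDdef, hSSdef, hZsdef, hfdef, hwdef] using h1
private lemma trace_quad {ι : Type*} [Fintype ι] {n : ℕ} (W : Matrix (Fin n) ι ℝ)
    (M : Matrix ι ι ℝ) :
    (W * M * Wᵀ).trace = ∑ i, (fun j => W i j) ⬝ᵥ (M *ᵥ (fun j => W i j)) := by
  simp only [Matrix.trace, Matrix.diag, Matrix.mul_apply, Matrix.transpose_apply,
    Matrix.mulVec, dotProduct, Finset.sum_mul, Finset.mul_sum]
  apply Finset.sum_congr rfl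
  intro i _
  rw [Finset.sum_comm]
  apply Finset.sum_congr rfl
  intro j _
  apply Finset.sum_congr rfl
  intro k _
  ring

private lemma trace_sq {ι : Type*} [Fintype ι] {n : ℕ} (B : Matrix (Fin n) ι ℝ) :
    (B * Bᵀ).trace = ∑ i, ∑ j, (B i j) ^ 2 := by
  simp [Matrix.trace, Matrix.diag, Matrix.mul_apply, Matrix.transpose_apply, sq]

/-- from the proof of Theorem 2.4: Frobenius-norm estimate
`‖Φ(t) X₀ − V Φ̃(t) X̃₀‖_F² ≤ tr([I −V] Z^e_γ(t) [I −V]ᵀ) · exp{∫₀ᵗ ‖γ u⁰(s)‖₂² ds}`. -/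
theorem fundamental_solution_projection_estimate
    {n nr q m : ℕ} (γ : ℝ) (hγ : 0 < γ)
    (A : Matrix (Fin n) (Fin n) ℝ) (N : Fin m → Matrix (Fin n) (Fin n) ℝ)
    (X₀ : Matrix (Fin n) (Fin q) ℝ)
    (At : Matrix (Fin nr) (Fin nr) ℝ) (Nt : Fin m → Matrix (Fin nr) (Fin nr) ℝ)
    (Xt₀ : Matrix (Fin nr) (Fin q) ℝ)
    (V : Matrix (Fin n) (Fin nr) ℝ)
    (u : ℝ → Fin m → ℝ) (hu : Continuous u)
    -- `Φ` is the fundamental solution of the system `(A, Nₖ)`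
    (Φ : ℝ → ℝ → Matrix (Fin n) (Fin n) ℝ)
    (hΦinit : ∀ s, 0 ≤ s → Φ s s = 1)
    (hΦode : ∀ s, 0 ≤ s → ∀ t, s ≤ t →
      HasDerivAt (fun τ => Φ τ s) (A * Φ t s + ∑ k, u t k • (N k * Φ t s)) t)
    -- `Φt` is the fundamental solution of the system `(Ã, Ñₖ)`
    (Φt : ℝ → ℝ → Matrix (Fin nr) (Fin nr) ℝ)
    (hΦtinit : ∀ s, 0 ≤ s → Φt s s = 1)
    (hΦtode : ∀ s, 0 ≤ s → ∀ t, s ≤ t →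
      HasDerivAt (fun τ => Φt τ s) (At * Φt t s + ∑ k, u t k • (Nt k * Φt t s)) t)
    -- `Ze` solves the augmented generalized Lyapunov matrix ODE
    (Ze : ℝ → Matrix (Fin n ⊕ Fin nr) (Fin n ⊕ Fin nr) ℝ)
    (hZe0 : Ze 0 = Matrix.fromRows X₀ Xt₀ * (Matrix.fromRows X₀ Xt₀)ᵀ)
    (hZeode : ∀ t, 0 ≤ t → HasDerivAt Ze
      (Matrix.fromBlocks A 0 0 At * Ze t + Ze t * (Matrix.fromBlocks A 0 0 At)ᵀ
        + (γ ^ 2)⁻¹ • ∑ k,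
            Matrix.fromBlocks (N k) 0 0 (Nt k) * Ze t
              * (Matrix.fromBlocks (N k) 0 0 (Nt k))ᵀ) t)
    (t : ℝ) (ht : 0 ≤ t) :
    ∑ i, ∑ j, ((Φ t 0 * X₀ - V * (Φt t 0 * Xt₀)) i j) ^ 2
      ≤ (Matrix.fromCols (1 : Matrix (Fin n) (Fin n) ℝ) (-V) * Ze t
          * (Matrix.fromCols (1 : Matrix (Fin n) (Fin n) ℝ) (-V))ᵀ).trace
        * Real.exp (∫ v in (0 : ℝ)..t,
            ∑ k, (γ * (if Matrix.fromBlocks (N k) 0 0 (Nt k) = 0 then (0 : ℝ) else u v k)) ^ 2) := by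
  -- the augmented fundamental-solution trajectory
  set Yf : ℝ → Matrix (Fin n ⊕ Fin nr) (Fin q) ℝ :=
    fun s => Matrix.fromBlocks (Φ s 0) 0 0 (Φt s 0) * Matrix.fromRows X₀ Xt₀ with hYdef
  have hY0 : Yf 0 = Matrix.fromRows X₀ Xt₀ := by
    simp only [hYdef, hΦinit 0 le_rfl, hΦtinit 0 le_rfl, Matrix.fromBlocks_one, Matrix.one_mul]
  have hfromBlocks_sum : ∀ (F : Fin m → Matrix (Fin n) (Fin n) ℝ)
      (G : Fin m → Matrix (Fin nr) (Fin nr) ℝ),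
      ∑ k, Matrix.fromBlocks (F k) 0 0 (G k)
        = Matrix.fromBlocks (∑ k, F k) 0 0 (∑ k, G k) := by
    intro F G
    ext (i | i) (j | j) <;>
      simp [Matrix.sum_apply, Matrix.fromBlocks]
  have hYode : ∀ τ : ℝ, 0 ≤ τ → HasDerivAt Yf
      ((Matrix.fromBlocks A 0 0 At
          + ∑ k, u τ k • Matrix.fromBlocks (N k) 0 0 (Nt k)) * Yf τ) τ := by
    intro τ hτ
    have h1 := (hΦode 0 le_rfl τ hτ).matFromBlocks (hΦtode 0 le_rfl τ hτ)
    have h2 := h1.matMul (hasDerivAt_const τ (Matrix.fromRows X₀ Xt₀))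
    rw [Matrix.mul_zero, add_zero] at h2
    have e1 : ∑ k, u τ k • Matrix.fromBlocks (N k) 0 0 (Nt k)
        = Matrix.fromBlocks (∑ k, u τ k • N k) 0 0 (∑ k, u τ k • Nt k) := by
      rw [← hfromBlocks_sum]
      apply Finset.sum_congr rfl
      intro k _
      rw [Matrix.fromBlocks_smul]
      simp
    have hident : Matrix.fromBlocks (A * Φ τ 0 + ∑ k, u τ k • (N k * Φ τ 0)) 0 0
          (At * Φt τ 0 + ∑ k, u τ k • (Nt k * Φt τ 0))
        = (Matrix.fromBlocks A 0 0 At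
            + ∑ k, u τ k • Matrix.fromBlocks (N k) 0 0 (Nt k))
            * Matrix.fromBlocks (Φ τ 0) 0 0 (Φt τ 0) := by
      rw [Matrix.add_mul, e1, Matrix.fromBlocks_multiply, Matrix.fromBlocks_multiply,
        Matrix.fromBlocks_add]
      simp [Finset.sum_mul, smul_mul_assoc]
    rw [hident] at h2
    rw [Matrix.mul_assoc] at h2
    exact h2
  have happly := aux_main γ hγ (Matrix.fromBlocks A 0 0 At)
    (fun k => Matrix.fromBlocks (N k) 0 0 (Nt k)) (Matrix.fromRows X₀ Xt₀)
    u hu Yf hY0 hYode Ze hZe0 hZeode t ht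
  -- notation
  set W : Matrix (Fin n) (Fin n ⊕ Fin nr) ℝ :=
    Matrix.fromCols (1 : Matrix (Fin n) (Fin n) ℝ) (-V) with hWdef
  set I : ℝ := ∫ v in (0 : ℝ)..t,
      ∑ k, (γ * (if Matrix.fromBlocks (N k) 0 0 (Nt k) = 0 then (0 : ℝ) else u v k)) ^ 2
    with hIdef
  set Zst : Matrix (Fin n ⊕ Fin nr) (Fin n ⊕ Fin nr) ℝ :=
    (2⁻¹:ℝ) • (Ze t + (Ze t)ᵀ) with hZstdef
  -- summed positivity over the rows of W
  have hsum : 0 ≤ ∑ i, (fun j => W i j) ⬝ᵥ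
      ((Real.exp I • Zst - Yf t * (Yf t)ᵀ) *ᵥ (fun j => W i j)) :=
    Finset.sum_nonneg fun i _ => happly _
  rw [← trace_quad] at hsum
  -- expand the trace of the difference
  have hsplit : W * (Real.exp I • Zst - Yf t * (Yf t)ᵀ) * Wᵀ
      = Real.exp I • (W * Zst * Wᵀ) - W * (Yf t * (Yf t)ᵀ) * Wᵀ := by
    rw [Matrix.mul_sub, Matrix.sub_mul, Matrix.mul_smul, Matrix.smul_mul]
  rw [hsplit, Matrix.trace_sub, Matrix.trace_smul, smul_eq_mul, sub_nonneg] at hsum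
  -- tr (W Zst Wᵀ) = tr (W Ze Wᵀ)
  have htr1 : (W * Zst * Wᵀ).trace = (W * Ze t * Wᵀ).trace := by
    have h2 : W * (Ze t)ᵀ * Wᵀ = (W * Ze t * Wᵀ)ᵀ := by
      rw [Matrix.transpose_mul, Matrix.transpose_mul, Matrix.transpose_transpose,
        Matrix.mul_assoc]
    rw [hZstdef, Matrix.mul_smul, Matrix.smul_mul, Matrix.mul_add, Matrix.add_mul,
      Matrix.trace_smul, Matrix.trace_add, h2, Matrix.trace_transpose, smul_eq_mul]
    ring
  -- tr (W P Wᵀ) is the Frobenius norm squared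
  have htr2 : (W * (Yf t * (Yf t)ᵀ) * Wᵀ).trace
      = ∑ i, ∑ j, ((W * Yf t) i j) ^ 2 := by
    have h3gen : ∀ B : Matrix (Fin n ⊕ Fin nr) (Fin q) ℝ,
        W * (B * Bᵀ) * Wᵀ = (W * B) * (W * B)ᵀ := by
      intro B
      rw [Matrix.transpose_mul, ← Matrix.mul_assoc, ← Matrix.mul_assoc]
    rw [h3gen (Yf t), trace_sq]
  have hWY : W * Yf t = Φ t 0 * X₀ - V * (Φt t 0 * Xt₀) := by
    rw [hYdef]
    show W * (Matrix.fromBlocks (Φ t 0) 0 0 (Φt t 0) * Matrix.fromRows X₀ Xt₀) = _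
    rw [Matrix.fromBlocks_mul_fromRows]
    simp only [Matrix.zero_mul, add_zero, zero_add]
    rw [hWdef, Matrix.fromCols_mul_fromRows, Matrix.one_mul, Matrix.neg_mul,
      ← sub_eq_add_neg]
  rw [htr1, htr2, hWY] at hsum
  linarith [hsum]
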